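/- arXiv:2310.20333 — 2 statements merged into one kernel-verified Lean document; each statement's English description precedes it below -/
import Mathlib

section
/- Consider a zero-sum semidefinite network game with payoff operators Φ_{ij}. If Λ = (Λ_1,…,Λ_N) is a profile of density matrices and λ ∈ ℝ^N satisfies Σ_{j ∈ N(i)} Φ_{ji}†(Λ_j) ⪰ λ_i I_{n_i} for every i ∈ [N], where Φ_{ji}† is the adjoint of Φ_{ji} with respect to the Frobenius inner product, then Σ_{i=1}^N λ_i ≤ 0. -/
open Matrix Kronecker BigOperators ComplexOrder

noncomputable section

/-- Frobenius inner product `⟨A, B⟩ = tr(Aᴴ B)`. -/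
def frob {α : Type*} [Fintype α] (A B : Matrix α α ℂ) : ℂ := (Aᴴ * B).trace

/-- A density matrix: positive semidefinite with trace one. -/
def IsDensity {α : Type*} [Fintype α] (X : Matrix α α ℂ) : Prop :=
  X.PosSemidef ∧ X.trace = 1

/-- The payoff operator `Φ_R` associated with a payoff matrix `R`,
defined entrywise by `Φ_R(T)_{a,b} = Σ_{c,d} R_{(a,c),(b,d)} T_{d,c}`. -/
def payoffOp {k m : ℕ} (R : Matrix (Fin k × Fin m) (Fin k × Fin m) ℂ)
    (T : Matrix (Fin m) (Fin m) ℂ) : Matrix (Fin k) (Fin k) ℂ :=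
  Matrix.of fun a b => ∑ c, ∑ d, R (a, c) (b, d) * T d c

/-- The payoff of player `i`: `p_i(X) = Σ_{j ∈ N(i)} ⟨R_{ij}, X_i ⊗ X_j⟩` (a real number). -/
def payoff {N : ℕ} (G : SimpleGraph (Fin N)) [DecidableRel G.Adj] (n : Fin N → ℕ)
    (R : ∀ i j : Fin N, Matrix (Fin (n i) × Fin (n j)) (Fin (n i) × Fin (n j)) ℂ)
    (X : ∀ i, Matrix (Fin (n i)) (Fin (n i)) ℂ) (i : Fin N) : ℝ :=
  (∑ j ∈ G.neighborFinset i, frob (R i j) ((X i) ⊗ₖ (X j))).re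

/-- `Φ_i(X) = Σ_{j ∈ N(i)} Φ_{ij}(X_j)`. -/
def Phi {N : ℕ} (G : SimpleGraph (Fin N)) [DecidableRel G.Adj] (n : Fin N → ℕ)
    (R : ∀ i j : Fin N, Matrix (Fin (n i) × Fin (n j)) (Fin (n i) × Fin (n j)) ℂ)
    (X : ∀ i, Matrix (Fin (n i)) (Fin (n i)) ℂ) (i : Fin N) :
    Matrix (Fin (n i)) (Fin (n i)) ℂ :=
  ∑ j ∈ G.neighborFinset i, payoffOp (R i j) (X j)

/-- Nash equilibrium (best-response) condition for a strategy profile. -/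
def IsNash {N : ℕ} (G : SimpleGraph (Fin N)) [DecidableRel G.Adj] (n : Fin N → ℕ)
    (R : ∀ i j : Fin N, Matrix (Fin (n i) × Fin (n j)) (Fin (n i) × Fin (n j)) ℂ)
    (X : ∀ i, Matrix (Fin (n i)) (Fin (n i)) ℂ) : Prop :=
  ∀ i, ∀ S : Matrix (Fin (n i)) (Fin (n i)) ℂ, IsDensity S →
    payoff G n R (Function.update X i S) i ≤ payoff G n R X i

/-- The largest eigenvalue of a Hermitian matrix (junk value `0` otherwise). -/
def lamMax {k : ℕ} (A : Matrix (Fin k) (Fin k) ℂ) : ℝ :=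
  if h : A.IsHermitian then ⨆ i, h.eigenvalues i else 0


lemma trace_re_nonneg {α : Type*} [Fintype α] [DecidableEq α] {M : Matrix α α ℂ} (hM : M.PosSemidef) :
    0 ≤ M.trace.re := by
  rw [Matrix.trace, Complex.re_sum]
  apply Finset.sum_nonneg
  intro i _
  have := hM.re_dotProduct_nonneg (Pi.single i 1)
  simpa [dotProduct, Matrix.mulVec, Pi.single_apply, Finset.sum_ite_eq,
    dotProduct_single] using this

lemma trace_mul_re_nonneg {α : Type*} [Fintype α] [DecidableEq α] {P Q : Matrix α α ℂ}
    (hP : P.PosSemidef) (hQ : Q.PosSemidef) : 0 ≤ ((P * Q).trace).re := by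
  open scoped MatrixOrder in
  have h1 : P * Q = CFC.sqrt P * (CFC.sqrt P * Q) := by
    rw [← mul_assoc, CFC.sqrt_mul_sqrt_self P hP.nonneg]
  rw [h1, Matrix.trace_mul_comm]
  open scoped MatrixOrder in
  have h2 : (CFC.sqrt P * Q * CFC.sqrt P).PosSemidef := by
    have := hQ.conjTranspose_mul_mul_same (CFC.sqrt P)
    rwa [(CFC.sqrt_nonneg P).posSemidef.isHermitian.eq] at this
  exact trace_re_nonneg h2

lemma frob_conj {α : Type*} [Fintype α] (A B : Matrix α α ℂ) :
    (starRingEnd ℂ) (frob A B) = frob B A := by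
  unfold frob
  rw [starRingEnd_apply, ← Matrix.trace_conjTranspose, Matrix.conjTranspose_mul,
    Matrix.conjTranspose_conjTranspose]

lemma frob_kron {k m : ℕ} {R : Matrix (Fin k × Fin m) (Fin k × Fin m) ℂ} (hR : R.IsHermitian)
    {S : Matrix (Fin k) (Fin k) ℂ} (hS : S.IsHermitian) (T : Matrix (Fin m) (Fin m) ℂ) :
    frob R (S ⊗ₖ T) = frob S (payoffOp R T) := by
  simp only [frob, Matrix.trace, Matrix.diag, Matrix.mul_apply, Matrix.conjTranspose_apply,
    Matrix.kroneckerMap_apply, payoffOp, Matrix.of_apply, hR.apply, hS.apply, Finset.mul_sum,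
    Fintype.sum_prod_type]
  trans (∑ b : Fin k, ∑ a : Fin k, ∑ d : Fin m, ∑ c : Fin m, R (b,d) (a,c) * (S a b * T c d))
  · exact Finset.sum_congr rfl fun _ _ => Finset.sum_comm
  rw [Finset.sum_comm]
  refine Finset.sum_congr rfl fun a _ => Finset.sum_congr rfl fun b _ =>
    Finset.sum_congr rfl fun d _ => Finset.sum_congr rfl fun c _ => by ring

/-- in a zero-sum semidefinite network game, if `Λ` is a profile of density
matrices and `Σ_{j ∈ N(i)} Φ_{ji}†(Λ_j) ⪰ λ_i I` for all `i`, then `Σ_i λ_i ≤ 0`.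
Here `A i j` denotes the Frobenius adjoint `Φ_{ji}†` of the payoff operator `Φ_{ji}`. -/
theorem stmt10 {N : ℕ} (G : SimpleGraph (Fin N)) [DecidableRel G.Adj] (n : Fin N → ℕ)
    (hn : ∀ i, 0 < n i)
    (R : ∀ i j : Fin N, Matrix (Fin (n i) × Fin (n j)) (Fin (n i) × Fin (n j)) ℂ)
    (hR : ∀ i j, G.Adj i j → (R i j).IsHermitian)
    (hzs : ∀ X : ∀ i, Matrix (Fin (n i)) (Fin (n i)) ℂ,
      (∀ i, IsDensity (X i)) → ∑ i, payoff G n R X i = 0)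
    (A : ∀ i j : Fin N,
      Matrix (Fin (n j)) (Fin (n j)) ℂ →ₗ[ℂ] Matrix (Fin (n i)) (Fin (n i)) ℂ)
    (hA : ∀ (i j : Fin N) (S : Matrix (Fin (n j)) (Fin (n j)) ℂ)
      (T : Matrix (Fin (n i)) (Fin (n i)) ℂ), frob (A i j S) T = frob S (payoffOp (R j i) T))
    (Λ : ∀ i, Matrix (Fin (n i)) (Fin (n i)) ℂ) (hΛ : ∀ i, IsDensity (Λ i))
    (lam : Fin N → ℝ)
    (hlam : ∀ i, ((∑ j ∈ G.neighborFinset i, A i j (Λ j))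
      - (lam i : ℂ) • (1 : Matrix (Fin (n i)) (Fin (n i)) ℂ)).PosSemidef) :
    ∑ i, lam i ≤ 0 := by
  classical
  have key : ∀ i, lam i ≤ (frob (Λ i) (∑ j ∈ G.neighborFinset i, A i j (Λ j))).re := by
    intro i
    set Sg := ∑ j ∈ G.neighborFinset i, A i j (Λ j) with hSg
    have h0 : 0 ≤ ((Λ i * (Sg - (lam i : ℂ) • 1)).trace).re :=
      trace_mul_re_nonneg (hΛ i).1 (hlam i)
    have hherm : (Λ i)ᴴ = Λ i := (hΛ i).1.isHermitian
    have htr : (Λ i * (Sg - (lam i : ℂ) • 1)).trace = frob (Λ i) Sg - (lam i : ℂ) := by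
      rw [Matrix.mul_sub, Matrix.mul_smul, Matrix.mul_one, Matrix.trace_sub, Matrix.trace_smul,
        (hΛ i).2, frob, hherm]
      simp
    rw [htr] at h0
    simp only [Complex.sub_re, Complex.ofReal_re] at h0
    linarith
  have hsum : ∑ i, (frob (Λ i) (∑ j ∈ G.neighborFinset i, A i j (Λ j))).re = 0 := by
    have e1 : ∀ i j, j ∈ G.neighborFinset i →
        (frob (Λ i) (A i j (Λ j))).re = (frob (R j i) (Λ j ⊗ₖ Λ i)).re := by
      intro i j hj
      have hadj : G.Adj j i := ((G.mem_neighborFinset i j).mp hj).symm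
      have h1 : (frob (Λ i) (A i j (Λ j))).re = (frob (A i j (Λ j)) (Λ i)).re := by
        rw [← frob_conj, Complex.conj_re]
      rw [h1, hA, ← frob_kron (hR j i hadj) (hΛ j).1.isHermitian]
    calc ∑ i, (frob (Λ i) (∑ j ∈ G.neighborFinset i, A i j (Λ j))).re
        = ∑ i, ∑ j ∈ G.neighborFinset i, (frob (R j i) (Λ j ⊗ₖ Λ i)).re := by
          refine Finset.sum_congr rfl fun i _ => ?_
          have : frob (Λ i) (∑ j ∈ G.neighborFinset i, A i j (Λ j))
              = ∑ j ∈ G.neighborFinset i, frob (Λ i) (A i j (Λ j)) := by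
            simp [frob, Finset.mul_sum, Matrix.trace_sum]
          rw [this, Complex.re_sum]
          exact Finset.sum_congr rfl fun j hj => e1 i j hj
      _ = ∑ j, ∑ i ∈ G.neighborFinset j, (frob (R j i) (Λ j ⊗ₖ Λ i)).re := by
          refine Finset.sum_comm' ?_
          intro i j
          simp [SimpleGraph.mem_neighborFinset, G.adj_comm]
      _ = ∑ j, payoff G n R Λ j := by
          refine Finset.sum_congr rfl fun j _ => ?_
          rw [payoff, Complex.re_sum]
      _ = 0 := hzs Λ hΛ
  calc ∑ i, lam i ≤ ∑ i, (frob (Λ i) (∑ j ∈ G.neighborFinset i, A i j (Λ j))).re :=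
        Finset.sum_le_sum fun i _ => key i
    _ = 0 := hsum

end
end

section
/- Consider a semidefinite network game with payoff operators Φ_{ij} and Φ_i(X) = Σ_{j ∈ N(i)} Φ_{ij}(X_j). A profile X = (X_1,…,X_N) of density matrices is a Nash equilibrium if and only if there exist real numbers λ_1,…,λ_N such that for every i ∈ [N]: λ_i I_{n_i} − Φ_i(X) is positive semidefinite and ⟨X_i, λ_i I_{n_i} − Φ_i(X)⟩ = 0. -/
open Matrix Kronecker BigOperators ComplexOrder

noncomputable section

lemma frob_eq {α : Type*} [Fintype α] (A B : Matrix α α ℂ) :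
    frob A B = ∑ p, ∑ q, (starRingEnd ℂ) (A q p) * B q p := by
  simp [frob, Matrix.trace, Matrix.mul_apply, Matrix.conjTranspose_apply, Matrix.diag]

lemma frob_star {α : Type*} [Fintype α] {A B : Matrix α α ℂ}
    (hA : A.IsHermitian) (hB : B.IsHermitian) :
    (starRingEnd ℂ) (frob A B) = frob A B := by
  rw [frob_eq, map_sum]
  simp_rw [map_sum, _root_.map_mul, Complex.conj_conj]
  rw [Finset.sum_comm]
  refine Finset.sum_congr rfl fun p _ => Finset.sum_congr rfl fun q _ => ?_
  rw [show (starRingEnd ℂ) (B p q) = B q p from hB.apply q p,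
    show (A q p : ℂ) = (starRingEnd ℂ) (A p q) from (hA.apply q p).symm, Complex.conj_conj]

lemma frob_re {α : Type*} [Fintype α] {A B : Matrix α α ℂ}
    (hA : A.IsHermitian) (hB : B.IsHermitian) :
    frob A B = (((frob A B).re : ℝ) : ℂ) :=
  (Complex.conj_eq_iff_re.mp (frob_star hA hB)).symm

lemma frob_sum {α β : Type*} [Fintype α] (A : Matrix α α ℂ) (s : Finset β)
    (f : β → Matrix α α ℂ) :
    frob A (∑ j ∈ s, f j) = ∑ j ∈ s, frob A (f j) := by
  simp [frob, Matrix.mul_sum, Matrix.trace_sum]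

open scoped MatrixOrder in
lemma frob_psd_nonneg {α : Type*} [Fintype α] [DecidableEq α] {A B : Matrix α α ℂ}
    (hA : A.PosSemidef) (hB : B.PosSemidef) : 0 ≤ (frob A B).re := by
  have h1 : frob A B = (CFC.sqrt A * (CFC.sqrt A * B)).trace := by
    rw [frob, hA.isHermitian.eq, ← Matrix.mul_assoc, CFC.sqrt_mul_sqrt_self A hA.nonneg]
  rw [h1, Matrix.trace_mul_comm]
  have h2 := hB.conjTranspose_mul_mul_same (CFC.sqrt A)
  rw [(CFC.sqrt_nonneg A).posSemidef.isHermitian.eq] at h2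
  exact trace_re_nonneg h2

lemma smul_one_sub_posSemidef {α : Type*} [Fintype α] [DecidableEq α] {A : Matrix α α ℂ}
    (hA : A.IsHermitian) {mu : ℝ} (h : ∀ i, hA.eigenvalues i ≤ mu) :
    ((mu : ℂ) • (1 : Matrix α α ℂ) - A).PosSemidef := by
  set U : Matrix α α ℂ := (hA.eigenvectorUnitary : Matrix α α ℂ) with hUdef
  have hU : U * Uᴴ = 1 := by
    simpa [Matrix.star_eq_conjTranspose] using
      (Matrix.mem_unitaryGroup_iff.mp hA.eigenvectorUnitary.2)
  have key : (mu : ℂ) • (1 : Matrix α α ℂ) - A =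
      U * Matrix.diagonal (fun i => ((mu - hA.eigenvalues i : ℝ) : ℂ)) * Uᴴ := by
    have hdiag : Matrix.diagonal (fun i : α => ((mu - hA.eigenvalues i : ℝ) : ℂ)) =
        (mu : ℂ) • (1 : Matrix α α ℂ) - Matrix.diagonal (RCLike.ofReal ∘ hA.eigenvalues) := by
      ext a b
      by_cases hab : a = b <;>
        simp [Matrix.diagonal, Matrix.one_apply, hab, Complex.ofReal_sub]
    rw [hdiag, Matrix.mul_sub, Matrix.sub_mul, Matrix.mul_smul, Matrix.mul_one,
      Matrix.smul_mul, hU]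
    congr 1
    · rw [hUdef, ← Matrix.star_eq_conjTranspose]
      exact hA.spectral_theorem
  rw [key]
  refine Matrix.PosSemidef.mul_mul_conjTranspose_same ?_ U
  rw [Matrix.posSemidef_diagonal_iff]
  intro i
  rw [Complex.zero_le_real]
  linarith [h i]

lemma exists_density_frob_eq {α : Type*} [Fintype α] [DecidableEq α]
    {A : Matrix α α ℂ} (hA : A.IsHermitian) (i₀ : α) :
    ∃ S : Matrix α α ℂ, IsDensity S ∧ frob S A = ((hA.eigenvalues i₀ : ℝ) : ℂ) := by
  set v : α → ℂ := ⇑(hA.eigenvectorBasis i₀) with hv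
  have hvv : ∑ a, (starRingEnd ℂ) (v a) * v a = 1 := by
    have hnorm : ‖hA.eigenvectorBasis i₀‖ = 1 := hA.eigenvectorBasis.orthonormal.1 i₀
    have h2 : ∑ a, Complex.normSq (v a) = 1 := by
      have := congrArg (fun t : ℝ => t ^ 2) hnorm
      rw [EuclideanSpace.norm_eq] at this
      simp only [one_pow] at this
      rw [Real.sq_sqrt (Finset.sum_nonneg fun a _ => sq_nonneg _)] at this
      simpa [Complex.sq_norm, hv] using this
    calc ∑ a, (starRingEnd ℂ) (v a) * v a = ∑ a, (Complex.normSq (v a) : ℂ) := by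
          refine Finset.sum_congr rfl fun a _ => ?_
          rw [mul_comm, Complex.mul_conj]
        _ = 1 := by rw [← Complex.ofReal_sum, h2, Complex.ofReal_one]
  set S : Matrix α α ℂ := Matrix.of (fun a b => v a * (starRingEnd ℂ) (v b)) with hS
  have hmulvec : ∀ x : α → ℂ, S *ᵥ x = fun a => v a * (dotProduct (star v) x) := by
    intro x
    funext a
    simp only [hS, Matrix.mulVec, dotProduct, Matrix.of_apply, Pi.star_apply]
    rw [Finset.mul_sum]
    exact Finset.sum_congr rfl fun b _ => mul_assoc _ _ _
  have hherm : S.IsHermitian := by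
    ext a b
    simp only [hS, Matrix.conjTranspose_apply, Matrix.of_apply, star_mul', star_star,
      RCLike.star_def, Complex.conj_conj]
    exact mul_comm _ _
  have hpsd : S.PosSemidef := by
    refine Matrix.PosSemidef.of_dotProduct_mulVec_nonneg hherm fun x => ?_
    rw [hmulvec x]
    have hz : dotProduct (star x) (fun a => v a * (dotProduct (star v) x)) =
        star (dotProduct (star v) x) * (dotProduct (star v) x) := by
      simp only [dotProduct, Pi.star_apply, star_sum, star_mul', star_star]
      rw [Finset.sum_mul]
      exact Finset.sum_congr rfl fun a _ => by ring
    rw [hz]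
    exact star_mul_self_nonneg _
  have htr : S.trace = 1 := by
    rw [Matrix.trace]
    simp only [Matrix.diag, hS, Matrix.of_apply]
    calc ∑ a, v a * (starRingEnd ℂ) (v a) = ∑ a, (starRingEnd ℂ) (v a) * v a := by
          refine Finset.sum_congr rfl fun a _ => mul_comm _ _
        _ = 1 := hvv
  refine ⟨S, ⟨hpsd, htr⟩, ?_⟩
  have heig : A *ᵥ v = (hA.eigenvalues i₀ : ℂ) • v := by
    rw [hv, hA.mulVec_eigenvectorBasis i₀]
    funext a
    simp only [Pi.smul_apply, Complex.real_smul, smul_eq_mul]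
  rw [frob_eq]
  calc ∑ p, ∑ q, (starRingEnd ℂ) (S q p) * A q p
      = ∑ q, (starRingEnd ℂ) (v q) * (A *ᵥ v) q := by
        rw [Finset.sum_comm]
        refine Finset.sum_congr rfl fun q _ => ?_
        simp only [hS, Matrix.of_apply, _root_.map_mul, Complex.conj_conj, Matrix.mulVec,
          dotProduct, Finset.mul_sum]
        refine Finset.sum_congr rfl fun p _ => ?_
        ring
    _ = ((hA.eigenvalues i₀ : ℝ) : ℂ) := by
        rw [heig]
        simp only [Pi.smul_apply, smul_eq_mul]
        calc ∑ q, (starRingEnd ℂ) (v q) * ((hA.eigenvalues i₀ : ℂ) * v q)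
            = (hA.eigenvalues i₀ : ℂ) * ∑ q, (starRingEnd ℂ) (v q) * v q := by
              rw [Finset.mul_sum]; refine Finset.sum_congr rfl fun q _ => by ring
          _ = _ := by rw [hvv, mul_one]

lemma payoffOp_isHermitian {k m : ℕ} {R : Matrix (Fin k × Fin m) (Fin k × Fin m) ℂ}
    (hR : R.IsHermitian) {T : Matrix (Fin m) (Fin m) ℂ} (hT : T.IsHermitian) :
    (payoffOp R T).IsHermitian := by
  ext a b
  simp only [Matrix.conjTranspose_apply, payoffOp, Matrix.of_apply, star_sum, star_mul']
  rw [Finset.sum_comm]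
  refine Finset.sum_congr rfl fun c _ => Finset.sum_congr rfl fun d _ => ?_
  rw [show star (T c d) = T d c from hT.apply d c,
    show star (R (b, d) (a, c)) = R (a, c) (b, d) from hR.apply _ _]

lemma frob_smul_one_sub {α : Type*} [Fintype α] [DecidableEq α] {X : Matrix α α ℂ}
    (A : Matrix α α ℂ) (hXh : X.IsHermitian) (hXt : X.trace = 1) (c : ℂ) :
    frob X (c • (1 : Matrix α α ℂ) - A) = c - frob X A := by
  rw [frob, frob, hXh.eq, Matrix.mul_sub, Matrix.trace_sub, Matrix.mul_smul, Matrix.mul_one,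
    Matrix.trace_smul, hXt, smul_eq_mul, mul_one]

lemma payoff_update_eq {N : ℕ} (G : SimpleGraph (Fin N)) [DecidableRel G.Adj] (n : Fin N → ℕ)
    (R : ∀ i j : Fin N, Matrix (Fin (n i) × Fin (n j)) (Fin (n i) × Fin (n j)) ℂ)
    (hR : ∀ i j, G.Adj i j → (R i j).IsHermitian)
    (X : ∀ i, Matrix (Fin (n i)) (Fin (n i)) ℂ) (i : Fin N)
    (S : Matrix (Fin (n i)) (Fin (n i)) ℂ) (hS : S.IsHermitian) :
    payoff G n R (Function.update X i S) i = (frob S (Phi G n R X i)).re := by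
  unfold payoff Phi
  rw [frob_sum]
  congr 1
  refine Finset.sum_congr rfl fun j hj => ?_
  have hadj : G.Adj i j := (SimpleGraph.mem_neighborFinset _ _ _).mp hj
  rw [Function.update_self, Function.update_of_ne hadj.ne']
  exact frob_kron (hR i j hadj) hS (X j)

lemma phi_isHermitian {N : ℕ} (G : SimpleGraph (Fin N)) [DecidableRel G.Adj] (n : Fin N → ℕ)
    (R : ∀ i j : Fin N, Matrix (Fin (n i) × Fin (n j)) (Fin (n i) × Fin (n j)) ℂ)
    (hR : ∀ i j, G.Adj i j → (R i j).IsHermitian)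
    (X : ∀ i, Matrix (Fin (n i)) (Fin (n i)) ℂ) (hXh : ∀ j, (X j).IsHermitian) (i : Fin N) :
    (Phi G n R X i).IsHermitian := by
  unfold Phi
  rw [Matrix.IsHermitian, Matrix.conjTranspose_sum]
  exact Finset.sum_congr rfl fun j hj =>
    payoffOp_isHermitian (hR i j ((SimpleGraph.mem_neighborFinset _ _ _).mp hj)) (hXh j)

/-- a profile of density matrices `X` is a Nash equilibrium iff there exist
reals `λ_1, …, λ_N` such that for every `i`, `λ_i I − Φ_i(X)` is positive semidefinite and
`⟨X_i, λ_i I − Φ_i(X)⟩ = 0`. -/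
theorem stmt16 {N : ℕ} (G : SimpleGraph (Fin N)) [DecidableRel G.Adj] (n : Fin N → ℕ)
    (hn : ∀ i, 0 < n i)
    (R : ∀ i j : Fin N, Matrix (Fin (n i) × Fin (n j)) (Fin (n i) × Fin (n j)) ℂ)
    (hR : ∀ i j, G.Adj i j → (R i j).IsHermitian)
    (X : ∀ i, Matrix (Fin (n i)) (Fin (n i)) ℂ) (hX : ∀ i, IsDensity (X i)) :
    IsNash G n R X ↔ ∃ lam : Fin N → ℝ, ∀ i,
      ((lam i : ℂ) • (1 : Matrix (Fin (n i)) (Fin (n i)) ℂ) - Phi G n R X i).PosSemidef ∧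
      frob (X i) ((lam i : ℂ) • (1 : Matrix (Fin (n i)) (Fin (n i)) ℂ) - Phi G n R X i) = 0 := by
  have hXh : ∀ i, (X i).IsHermitian := fun i => (hX i).1.1
  have hAh : ∀ i, (Phi G n R X i).IsHermitian := fun i => phi_isHermitian G n R hR X hXh i
  have hpay : ∀ (i : Fin N) (S : Matrix (Fin (n i)) (Fin (n i)) ℂ), S.IsHermitian →
      payoff G n R (Function.update X i S) i = (frob S (Phi G n R X i)).re :=
    fun i S hS => payoff_update_eq G n R hR X i S hS
  have hpayX : ∀ i, payoff G n R X i = (frob (X i) (Phi G n R X i)).re := fun i => by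
    have h := hpay i (X i) (hXh i)
    rwa [Function.update_eq_self] at h
  constructor
  · intro hN
    refine ⟨fun i => ⨆ j, (hAh i).eigenvalues j, fun i => ?_⟩
    haveI : Nonempty (Fin (n i)) := ⟨⟨0, hn i⟩⟩
    have hle : ∀ j, (hAh i).eigenvalues j ≤ ⨆ j, (hAh i).eigenvalues j := fun j =>
      le_ciSup (Set.Finite.bddAbove (Set.finite_range _)) j
    have hpsd := smul_one_sub_posSemidef (hAh i) hle
    refine ⟨hpsd, ?_⟩
    obtain ⟨j₀, hj₀⟩ : ∃ j₀, (hAh i).eigenvalues j₀ = ⨆ j, (hAh i).eigenvalues j :=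
      exists_eq_ciSup_of_finite
    obtain ⟨S, hSdens, hSfrob⟩ := exists_density_frob_eq (hAh i) j₀
    have h1 : (⨆ j, (hAh i).eigenvalues j) ≤ (frob (X i) (Phi G n R X i)).re := by
      have hle2 := hN i S hSdens
      rw [hpay i S hSdens.1.1, hpayX i] at hle2
      rw [hSfrob] at hle2
      simpa [hj₀] using hle2
    have h2 : (frob (X i) (Phi G n R X i)).re ≤ ⨆ j, (hAh i).eigenvalues j := by
      have h3 := frob_psd_nonneg (hX i).1 hpsd
      rw [frob_smul_one_sub (Phi G n R X i) (hXh i) (hX i).2] at h3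
      simp only [Complex.sub_re, Complex.ofReal_re] at h3
      linarith
    have heq : (frob (X i) (Phi G n R X i)).re = ⨆ j, (hAh i).eigenvalues j :=
      le_antisymm h2 h1
    rw [frob_smul_one_sub (Phi G n R X i) (hXh i) (hX i).2,
      frob_re (hXh i) (hAh i), heq, sub_self]
  · rintro ⟨lam, hlam⟩ i S hS
    obtain ⟨hpsd, hzero⟩ := hlam i
    rw [hpay i S hS.1.1, hpayX i]
    have hXA : (frob (X i) (Phi G n R X i)).re = lam i := by
      rw [frob_smul_one_sub (Phi G n R X i) (hXh i) (hX i).2] at hzero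
      have := sub_eq_zero.mp hzero
      rw [← this, Complex.ofReal_re]
    have hSA : (frob S (Phi G n R X i)).re ≤ lam i := by
      have h3 := frob_psd_nonneg hS.1 hpsd
      rw [frob_smul_one_sub (Phi G n R X i) hS.1.1 hS.2] at h3
      simp only [Complex.sub_re, Complex.ofReal_re] at h3
      linarith
    rw [hXA]
    exact hSA

end
end
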